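/- A simple graph G has chromatic number c if and only if for every natural number s the jet graph J_s(G) has chromatic number c. -/

import Mathlib

/-- The jet graph of order `s` of a simple graph `G`: vertices are pairs `(v, i)`
with `i ∈ {0,…,s}`, and `(a,i)` is adjacent to `(b,j)` iff `G.Adj a b` and `i + j ≤ s`. -/
def jetGraph {V : Type*} (G : SimpleGraph V) (s : ℕ) : SimpleGraph (V × Fin (s + 1)) where
  Adj p q := G.Adj p.1 q.1 ∧ p.2.val + q.2.val ≤ s
  symm := by
    constructor
    intro p q h
    exact ⟨h.1.symm, by omega⟩
  loopless := by
    constructor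
    intro p h
    exact G.loopless.irrefl _ h.1

lemma colorable_of_hom {V V' : Type*} {G : SimpleGraph V} {G' : SimpleGraph V'}
    (f : G →g G') {n : ℕ} (h : G'.Colorable n) : G.Colorable n := by
  obtain ⟨C⟩ := h
  exact ⟨C.comp f⟩

lemma jetGraph_chromaticNumber_eq {V : Type*} (G : SimpleGraph V) (s : ℕ) :
    (jetGraph G s).chromaticNumber = G.chromaticNumber := by
  have f1 : jetGraph G s →g G := ⟨Prod.fst, fun h => h.1⟩
  have f2 : G →g jetGraph G s := ⟨fun v => (v, 0), fun h => ⟨h, by simp⟩⟩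
  exact le_antisymm
    (SimpleGraph.chromaticNumber_le_of_forall_imp fun n => colorable_of_hom f1)
    (SimpleGraph.chromaticNumber_le_of_forall_imp fun n => colorable_of_hom f2)

theorem jetGraph_chromaticNumber {V : Type*} (G : SimpleGraph V) (c : ℕ∞) :
    G.chromaticNumber = c ↔ ∀ s : ℕ, (jetGraph G s).chromaticNumber = c := by
  constructor
  · intro h s; rw [jetGraph_chromaticNumber_eq, h]
  · intro h; rw [← jetGraph_chromaticNumber_eq G 0]; exact h 0
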